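/- Let f₁, …, f_m : ℝ^p → ℝ^p be an iterated function system satisfying the strong separation condition, i.e. its attractor F (the unique nonempty compact set with F = ⋃_{i=1}^m f_i(F)) satisfies that the sets f₁(F), …, f_m(F) are pairwise disjoint. Assume each f_i is bi-Lipschitz: there exist 0 < ν_i, ρ_i < 1 with ν_i|x − y| ≤ |f_i(x) − f_i(y)| ≤ ρ_i|x − y| for all x, y. Then F admits a (ν, ρ) separated structure for some 0 < ν, ρ < 1. -/

import Mathlib

noncomputable section

/-- A nonempty set `F ⊆ ℝ^p` admits a `(ν, ρ)` separated structure: there are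
`K > 0` and, for every `k`, a finite family `𝒮_k` of sets covering `F`, each of
diameter `< K ν^k`, with distinct members at (inf) distance `> (1/K) ρ^k`. -/
def SepStructure {p : ℕ} (ν ρ : ℝ) (F : Set (EuclideanSpace ℝ (Fin p))) : Prop :=
  ∃ K : ℝ, 0 < K ∧ ∀ k : ℕ, ∃ S : Finset (Set (EuclideanSpace ℝ (Fin p))),
    (F ⊆ ⋃ A ∈ S, A) ∧
    (∀ A ∈ S, EMetric.diam A < ENNReal.ofReal (K * ν ^ k)) ∧
    (∀ A ∈ S, ∀ B ∈ S, A ≠ B →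
      ENNReal.ofReal ((1 / K) * ρ ^ k) < ⨅ x ∈ A, EMetric.infEdist x B)

open Classical in
/-- The families of cylinder sets of the IFS `f`: images of `F` under words of
length `k`. -/
noncomputable def famS {p m : ℕ}
    (f : Fin m → EuclideanSpace ℝ (Fin p) → EuclideanSpace ℝ (Fin p))
    (F : Set (EuclideanSpace ℝ (Fin p))) : ℕ → Finset (Set (EuclideanSpace ℝ (Fin p)))
  | 0 => {F}
  | (k + 1) => (Finset.univ ×ˢ famS f F k).image fun z => f z.1 '' z.2

lemma mem_famS_succ {p m : ℕ}
    (f : Fin m → EuclideanSpace ℝ (Fin p) → EuclideanSpace ℝ (Fin p))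
    (F : Set (EuclideanSpace ℝ (Fin p))) (k : ℕ) (A : Set (EuclideanSpace ℝ (Fin p))) :
    A ∈ famS f F (k + 1) ↔ ∃ i, ∃ B ∈ famS f F k, A = f i '' B := by
  classical
  constructor
  · intro hA
    simp only [famS, Finset.mem_image, Finset.mem_product, Finset.mem_univ, true_and] at hA
    obtain ⟨z, hz, hEq⟩ := hA
    exact ⟨z.1, z.2, hz, hEq.symm⟩
  · rintro ⟨i, B, hB, rfl⟩
    simp only [famS, Finset.mem_image, Finset.mem_product, Finset.mem_univ, true_and]
    exact ⟨(i, B), hB, rfl⟩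

/-- If `f₁, …, f_m` is a bi-Lipschitz iterated function system on
`ℝ^p` satisfying the strong separation condition (the images of the attractor `F`
are pairwise disjoint), then `F` admits a `(ν, ρ)` separated structure for some
`0 < ν, ρ < 1`. -/
theorem stmt7 {p : ℕ} (m : ℕ) (hm : 0 < m)
    (f : Fin m → EuclideanSpace ℝ (Fin p) → EuclideanSpace ℝ (Fin p))
    (ν ρ : Fin m → ℝ)
    (hν : ∀ i, 0 < ν i ∧ ν i < 1) (hρ : ∀ i, 0 < ρ i ∧ ρ i < 1)
    (hbl : ∀ i, ∀ x y, ν i * dist x y ≤ dist (f i x) (f i y) ∧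
      dist (f i x) (f i y) ≤ ρ i * dist x y)
    (F : Set (EuclideanSpace ℝ (Fin p))) (hFne : F.Nonempty) (hFc : IsCompact F)
    (hinv : F = ⋃ i, f i '' F)
    (hssc : ∀ i j, i ≠ j → Disjoint (f i '' F) (f j '' F)) :
    ∃ ν' ρ' : ℝ, 0 < ν' ∧ ν' < 1 ∧ 0 < ρ' ∧ ρ' < 1 ∧ SepStructure ν' ρ' F := by
  classical
  haveI : NeZero m := ⟨hm.ne'⟩
  have hmne : (Finset.univ : Finset (Fin m)).Nonempty := Finset.univ_nonempty
  -- contraction rates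
  set r : ℝ := Finset.univ.sup' hmne ρ with hr_def
  set s : ℝ := Finset.univ.inf' hmne ν with hs_def
  have hr0 : 0 < r := by
    obtain ⟨i, _, hi⟩ := Finset.exists_mem_eq_sup' hmne ρ
    rw [hr_def, hi]; exact (hρ i).1
  have hr1 : r < 1 := by
    rw [hr_def, Finset.sup'_lt_iff]
    exact fun i _ => (hρ i).2
  have hrle : ∀ i, ρ i ≤ r := fun i => Finset.le_sup' ρ (Finset.mem_univ i)
  have hs0 : 0 < s := by
    rw [hs_def, Finset.lt_inf'_iff]
    exact fun i _ => (hν i).1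
  have hs1 : s < 1 := by
    obtain ⟨i, _, hi⟩ := Finset.exists_mem_eq_inf' hmne ν
    rw [hs_def, hi]; exact (hν i).2
  have hsle : ∀ i, s ≤ ν i := fun i => Finset.inf'_le ν (Finset.mem_univ i)
  -- continuity and compactness of images
  have hcont : ∀ i, Continuous (f i) := by
    intro i
    refine (LipschitzWith.of_dist_le_mul (K := (ρ i).toNNReal) fun x y => ?_).continuous
    rw [Real.coe_toNNReal _ (hρ i).1.le]
    exact (hbl i x y).2
  have himg : ∀ i, IsCompact (f i '' F) := fun i => hFc.image (hcont i)
  -- injectivity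
  have hinj : ∀ i, Function.Injective (f i) := by
    intro i x y h
    have h1 := (hbl i x y).1
    rw [h, dist_self] at h1
    have : dist x y ≤ 0 := nonpos_of_mul_nonpos_right (by linarith [(hν i).1]) (hν i).1
    exact dist_le_zero.mp this
  -- separation constant δ
  have hpair : ∀ z : Fin m × Fin m, ∃ c : ℝ, 0 < c ∧
      (z.1 ≠ z.2 → ∀ x ∈ f z.1 '' F, ∀ y ∈ f z.2 '' F, c ≤ dist x y) := by
    intro z
    by_cases h : z.1 = z.2
    · exact ⟨1, one_pos, fun hne => absurd h hne⟩
    · obtain ⟨c, hc0, hc⟩ := EMetric.exists_pos_forall_lt_edist (himg z.1)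
        (himg z.2).isClosed (hssc _ _ h)
      refine ⟨c, hc0, fun _ x hx y hy => ?_⟩
      have := hc x hx y hy
      rw [edist_dist, ← ENNReal.ofReal_coe_nnreal] at this
      exact ((ENNReal.ofReal_lt_ofReal_iff_of_nonneg c.coe_nonneg).mp this).le
  set g : Fin m × Fin m → ℝ := fun z => (hpair z).choose with hg_def
  have hgpos : ∀ z, 0 < g z := fun z => (hpair z).choose_spec.1
  have hgspec : ∀ z : Fin m × Fin m, z.1 ≠ z.2 →
      ∀ x ∈ f z.1 '' F, ∀ y ∈ f z.2 '' F, g z ≤ dist x y :=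
    fun z => (hpair z).choose_spec.2
  have hmne2 : (Finset.univ : Finset (Fin m × Fin m)).Nonempty := Finset.univ_nonempty
  set δ : ℝ := Finset.univ.inf' hmne2 g with hδ_def
  have hδ0 : 0 < δ := by
    rw [hδ_def, Finset.lt_inf'_iff]
    exact fun z _ => hgpos z
  have hδ : ∀ i j, i ≠ j → ∀ x ∈ f i '' F, ∀ y ∈ f j '' F, δ ≤ dist x y := by
    intro i j hij x hx y hy
    exact le_trans (Finset.inf'_le g (Finset.mem_univ (i, j))) (hgspec (i, j) hij x hx y hy)
  -- diameter of F
  set D : ℝ := Metric.diam F with hD_def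
  have hD0 : 0 ≤ D := Metric.diam_nonneg
  have hD : ∀ x ∈ F, ∀ y ∈ F, dist x y ≤ D :=
    fun x hx y hy => Metric.dist_le_diam_of_mem hFc.isBounded hx hy
  -- f i '' F ⊆ F
  have hsubF : ∀ i, f i '' F ⊆ F := by
    intro i
    have h := Set.subset_iUnion (fun i => f i '' F) i
    rwa [← hinv] at h
  -- main induction
  have key : ∀ k : ℕ,
      (F ⊆ ⋃ A ∈ famS f F k, A) ∧
      (∀ A ∈ famS f F k, A ⊆ F) ∧
      (∀ A ∈ famS f F k, ∀ x ∈ A, ∀ y ∈ A, dist x y ≤ D * r ^ k) ∧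
      (∀ A ∈ famS f F k, ∀ B ∈ famS f F k, A ≠ B →
        ∀ x ∈ A, ∀ y ∈ B, δ * s ^ k ≤ dist x y) := by
    intro k
    induction k with
    | zero =>
      refine ⟨?_, ?_, ?_, ?_⟩
      · intro x hx
        have hF0 : F ∈ famS f F 0 := by simp [famS]
        exact Set.mem_biUnion hF0 hx
      · intro A hA
        simp only [famS, Finset.mem_singleton] at hA
        exact hA ▸ le_refl F
      · intro A hA x hx y hy
        simp only [famS, Finset.mem_singleton] at hA
        subst hA
        simpa using hD x hx y hy
      · intro A hA B hB hAB
        simp only [famS, Finset.mem_singleton] at hA hB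
        exact absurd (hA.trans hB.symm) hAB
    | succ k ih =>
      obtain ⟨ihcov, ihsub, ihdiam, ihsep⟩ := ih
      refine ⟨?_, ?_, ?_, ?_⟩
      · -- covering
        intro x hx
        have hx' : x ∈ ⋃ i, f i '' F := hinv ▸ hx
        obtain ⟨i, a, haF, rfl⟩ := by
          simpa only [Set.mem_iUnion, Set.mem_image] using hx'
        obtain ⟨B, hB, haB⟩ := by
          simpa only [Set.mem_iUnion, exists_prop] using ihcov haF
        exact Set.mem_biUnion ((mem_famS_succ f F k _).mpr ⟨i, B, hB, rfl⟩)
          (Set.mem_image_of_mem _ haB)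
      · -- subset of F
        intro A hA
        obtain ⟨i, B, hB, rfl⟩ := (mem_famS_succ f F k A).mp hA
        exact (Set.image_mono (ihsub B hB)).trans (hsubF i)
      · -- diameter
        intro A hA x hx y hy
        obtain ⟨i, B, hB, rfl⟩ := (mem_famS_succ f F k A).mp hA
        obtain ⟨a, ha, rfl⟩ := hx
        obtain ⟨b, hb, rfl⟩ := hy
        have h1 : dist (f i a) (f i b) ≤ ρ i * dist a b := (hbl i a b).2
        have h2 : dist a b ≤ D * r ^ k := ihdiam B hB a ha b hb
        have h3 : ρ i * dist a b ≤ r * (D * r ^ k) :=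
          mul_le_mul (hrle i) h2 dist_nonneg hr0.le
        calc dist (f i a) (f i b) ≤ r * (D * r ^ k) := h1.trans h3
          _ = D * r ^ (k + 1) := by ring
      · -- separation
        intro A hA B hB hAB x hx y hy
        obtain ⟨i, A', hA', rfl⟩ := (mem_famS_succ f F k A).mp hA
        obtain ⟨j, B', hB', rfl⟩ := (mem_famS_succ f F k B).mp hB
        obtain ⟨a, ha, rfl⟩ := hx
        obtain ⟨b, hb, rfl⟩ := hy
        by_cases hij : i = j
        · subst hij
          have hA'B' : A' ≠ B' := fun h => hAB (by rw [h])
          have h1 : δ * s ^ k ≤ dist a b := ihsep A' hA' B' hB' hA'B' a ha b hb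
          have h2 : ν i * dist a b ≤ dist (f i a) (f i b) := (hbl i a b).1
          have h3 : s * (δ * s ^ k) ≤ ν i * dist a b :=
            mul_le_mul (hsle i) h1 (by positivity) (hν i).1.le
          calc δ * s ^ (k + 1) = s * (δ * s ^ k) := by ring
            _ ≤ dist (f i a) (f i b) := h3.trans h2
        · have h1 : δ ≤ dist (f i a) (f j b) :=
            hδ i j hij _ (Set.mem_image_of_mem _ (ihsub A' hA' ha))
              _ (Set.mem_image_of_mem _ (ihsub B' hB' hb))
          have h2 : s ^ (k + 1) ≤ 1 := pow_le_one₀ hs0.le hs1.le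
          calc δ * s ^ (k + 1) ≤ δ * 1 := by nlinarith
            _ ≤ dist (f i a) (f j b) := by linarith
  -- assemble
  refine ⟨r, s, hr0, hr1, hs0, hs1, ?_⟩
  set K : ℝ := max (D + 1) (2 / δ) with hK_def
  have hK0 : 0 < K := lt_of_lt_of_le (by linarith) (le_max_left _ _)
  refine ⟨K, hK0, fun k => ⟨famS f F k, (key k).1, ?_, ?_⟩⟩
  · -- diameter bound
    intro A hA
    have h1 : EMetric.diam A ≤ ENNReal.ofReal (D * r ^ k) := by
      apply EMetric.diam_le
      intro x hx y hy
      rw [edist_dist]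
      exact ENNReal.ofReal_le_ofReal ((key k).2.2.1 A hA x hx y hy)
    refine lt_of_le_of_lt h1 ?_
    rw [ENNReal.ofReal_lt_ofReal_iff (by positivity)]
    have : D < K := lt_of_lt_of_le (by linarith) (le_max_left _ _)
    exact mul_lt_mul_of_pos_right this (by positivity)
  · -- separation bound
    intro A hA B hB hAB
    have h1 : ENNReal.ofReal (δ * s ^ k) ≤ ⨅ x ∈ A, EMetric.infEdist x B := by
      refine le_iInf₂ fun x hx => ?_
      refine EMetric.le_infEdist.2 ?_
      intro y hy
      rw [edist_dist]
      exact ENNReal.ofReal_le_ofReal ((key k).2.2.2 A hA B hB hAB x hx y hy)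
    refine lt_of_lt_of_le ?_ h1
    rw [ENNReal.ofReal_lt_ofReal_iff (by positivity)]
    have h2 : 2 / δ ≤ K := le_max_right _ _
    have h3 : 1 / K ≤ δ / 2 := by
      rw [show δ / 2 = 1 / (2 / δ) by field_simp]
      exact one_div_le_one_div_of_le (by positivity) h2
    have h4 : 1 / K < δ := h3.trans_lt (by linarith)
    exact mul_lt_mul_of_pos_right h4 (by positivity)

end
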